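/- Let G be a finite group with a normal subgroup E that is elementary abelian of order 8 (every nonidentity element of E has order 2 and |E| = 8), and let g ∈ G be an element of order 7 such that conjugation by g fixes no nonidentity element of E. Then for every injective group homomorphism ρ from the subgroup generated by E and g into the general linear group of a finite-dimensional complex vector space V, there exists a nonzero vector v ∈ V with ρ(g) v = v. -/

import Mathlib

open LinearMap

set_option linter.unusedSectionVars false

section FrobAux

variable {V : Type} [AddCommGroup V] [Module ℂ V] [FiniteDimensional ℂ V]
variable {H : Type*} [Group H]

private noncomputable def frobGrpSum (π : H →* (V →ₗ[ℂ] V)) (K : Subgroup H) [Fintype K] :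
    V →ₗ[ℂ] V := ∑ y : K, π y

private lemma frob_mul_grpSum (π : H →* (V →ₗ[ℂ] V)) {K : Subgroup H} [Fintype K]
    {x : H} (hx : x ∈ K) : π x * frobGrpSum π K = frobGrpSum π K := by
  rw [frobGrpSum, Finset.mul_sum]
  refine Fintype.sum_equiv (Equiv.mulLeft (⟨x, hx⟩ : K)) _ _ fun y => ?_
  simp [← map_mul]

private lemma frob_grpSum_sq (π : H →* (V →ₗ[ℂ] V)) (K : Subgroup H) [Fintype K] :
    frobGrpSum π K * frobGrpSum π K = (Nat.card K : ℂ) • frobGrpSum π K := by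
  nth_rewrite 1 [frobGrpSum]
  rw [Finset.sum_mul, Finset.sum_congr rfl (fun y _ => frob_mul_grpSum π y.2),
    Finset.sum_const, Finset.card_univ, Nat.card_eq_fintype_card]
  exact (Nat.cast_smul_eq_nsmul ℂ _ _).symm

private lemma frob_grpSum_comm (π : H →* (V →ₗ[ℂ] V)) {K : Subgroup H} [Fintype K]
    (hK : ∀ h : H, ∀ y ∈ K, h * y * h⁻¹ ∈ K) (h : H) :
    π h * frobGrpSum π K = frobGrpSum π K * π h := by
  rw [frobGrpSum, Finset.mul_sum, Finset.sum_mul]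
  refine Fintype.sum_bijective (fun y : ↥K => (⟨h * y * h⁻¹, hK h y y.2⟩ : ↥K)) ?_ _ _ fun y => ?_
  · constructor
    · intro y₁ y₂ h12
      have := congrArg Subtype.val h12
      simp only [] at this
      ext
      exact mul_left_cancel (mul_right_cancel this)
    · intro z
      refine ⟨⟨h⁻¹ * z * h, by simpa using hK h⁻¹ z z.2⟩, ?_⟩
      ext
      simp [mul_assoc]
  · show π h * π ↑y = π (h * ↑y * h⁻¹) * π h
    rw [← map_mul, ← map_mul]
    congr 1
    group

private lemma frob_idem_trace {f : V →ₗ[ℂ] V} (hf : f * f = f) :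
    ∃ p : Submodule ℂ V, IsProj p f ∧ trace ℂ V f = (Module.finrank ℂ p : ℂ) := by
  obtain ⟨p, hp⟩ := (LinearMap.isProj_iff_isIdempotentElem f).mpr hf
  exact ⟨p, hp, hp.trace⟩

end FrobAux

/-- If `G` is a finite group with a normal elementary abelian subgroup `E` of order `8`
and `g ∈ G` has order `7` and acts on `E` by conjugation fixing no nonidentity element,
then in every faithful finite-dimensional complex representation of `⟨E, g⟩` the element
`g` fixes a nonzero vector. -/
theorem frobenius_2_3_7_has_fixed_vector
    (G : Type) [Group G] [Finite G] (E : Subgroup G) [E.Normal]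
    (hE_card : Nat.card E = 8)
    (hE_sq : ∀ x ∈ E, x ^ 2 = 1)
    (hE_ab : ∀ x ∈ E, ∀ y ∈ E, x * y = y * x)
    (g : G) (hg : orderOf g = 7)
    (hfree : ∀ x ∈ E, x ≠ 1 → g * x * g⁻¹ ≠ x)
    (V : Type) [AddCommGroup V] [Module ℂ V] [FiniteDimensional ℂ V]
    (ρ : ↥(E ⊔ Subgroup.zpowers g) →* (V →ₗ[ℂ] V)ˣ)
    (hρ : Function.Injective ρ) :
    ∃ v : V, v ≠ 0 ∧
      (ρ ⟨g, le_sup_right (α := Subgroup G) (Subgroup.mem_zpowers g)⟩ : V →ₗ[ℂ] V) v = v := by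
  classical
  -- Step 1: g^k acts without nontrivial fixed points on E whenever ¬ 7 ∣ k
  have hfree' : ∀ k : ℕ, ¬ (7 ∣ k) → ∀ x ∈ E, g ^ k * x * (g ^ k)⁻¹ = x → x = 1 := by
    intro k hk x hxE hcomm
    by_contra hx1
    apply hfree x hxE hx1
    have hc : Commute (g ^ k) x := by
      have : g ^ k * x = (g ^ k * x * (g ^ k)⁻¹) * g ^ k := by group
      rw [hcomm] at this
      exact this
    have hc6 : Commute (g ^ (k ^ 6)) x := by
      have h' := hc.pow_left (k ^ 5)
      rwa [← pow_mul, show k * k ^ 5 = k ^ 6 by ring] at h'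
    have hgk : g ^ (k ^ 6) = g := by
      haveI : Fact (Nat.Prime 7) := ⟨by norm_num⟩
      have hk0 : (k : ZMod 7) ≠ 0 := by
        rwa [Ne, ZMod.natCast_eq_zero_iff]
      have h1 : ((k ^ 6 : ℕ) : ZMod 7) = ((1 : ℕ) : ZMod 7) := by
        push_cast
        have := ZMod.pow_card_sub_one_eq_one hk0
        norm_num at this
        exact this
      have hmod := (ZMod.natCast_eq_natCast_iff _ _ _).mp h1
      calc g ^ (k ^ 6) = g ^ 1 := by rw [pow_eq_pow_iff_modEq, hg]; exact hmod
        _ = g := pow_one g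
    rw [hgk] at hc6
    rw [hc6.eq]
    group
  -- Step 2: every element of the coset g^k E is conjugate to g^k by an element of E
  have hconj : ∀ k : ℕ, ¬ (7 ∣ k) → ∀ x ∈ E, ∃ y ∈ E, g ^ k * x = y * (g ^ k) * y⁻¹ := by
    intro k hk x hxE
    set F : ↥E → ↥E := fun y =>
      ⟨(g ^ k)⁻¹ * (↑y * g ^ k * (↑y)⁻¹),
        by
          have h1 : (g ^ k)⁻¹ * ↑y * ((g ^ k)⁻¹)⁻¹ ∈ E :=
            Subgroup.Normal.conj_mem ‹E.Normal› _ y.2 _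
          have : (g ^ k)⁻¹ * (↑y * g ^ k * (↑y)⁻¹)
              = ((g ^ k)⁻¹ * ↑y * ((g ^ k)⁻¹)⁻¹) * (↑y)⁻¹ := by group
          rw [this]
          exact mul_mem h1 (inv_mem y.2)⟩ with hF
    have hFinj : Function.Injective F := by
      intro y₁ y₂ h12
      have h1 : (g ^ k)⁻¹ * (↑y₁ * g ^ k * (↑y₁)⁻¹) = (g ^ k)⁻¹ * (↑y₂ * g ^ k * (↑y₂)⁻¹) :=
        congrArg Subtype.val h12
      have h2 : (↑y₁ : G) * g ^ k * (↑y₁)⁻¹ = ↑y₂ * g ^ k * (↑y₂)⁻¹ := mul_left_cancel h1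
      have h3 : ((↑y₂ : G))⁻¹ * ↑y₁ * g ^ k = g ^ k * ((↑y₂)⁻¹ * ↑y₁) := by
        calc (↑y₂ : G)⁻¹ * ↑y₁ * g ^ k
            = (↑y₂)⁻¹ * (↑y₁ * g ^ k * (↑y₁)⁻¹) * ↑y₁ := by group
          _ = (↑y₂)⁻¹ * (↑y₂ * g ^ k * (↑y₂)⁻¹) * ↑y₁ := by rw [h2]
          _ = g ^ k * ((↑y₂)⁻¹ * ↑y₁) := by group
      have h4 : g ^ k * ((↑y₂ : G)⁻¹ * ↑y₁) * (g ^ k)⁻¹ = (↑y₂)⁻¹ * ↑y₁ := by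
        rw [← h3]; group
      have h5 : ((↑y₂ : G))⁻¹ * ↑y₁ = 1 :=
        hfree' k hk _ (mul_mem (inv_mem y₂.2) y₁.2) h4
      ext
      exact (inv_mul_eq_one.mp h5).symm ▸ rfl
    have hFsurj : Function.Surjective F := Finite.surjective_of_injective hFinj
    obtain ⟨y, hy⟩ := hFsurj ⟨x, hxE⟩
    refine ⟨↑y, y.2, ?_⟩
    have := congrArg Subtype.val hy
    simp only [hF] at this
    calc g ^ k * x = g ^ k * ((g ^ k)⁻¹ * (↑y * g ^ k * (↑y)⁻¹)) := by rw [this]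
      _ = ↑y * g ^ k * (↑y)⁻¹ := by group
  -- Step 3: averaging operators
  letI : Fintype ↥(E ⊔ Subgroup.zpowers g) := Fintype.ofFinite _
  set g' : ↥(E ⊔ Subgroup.zpowers g) := ⟨g, le_sup_right (α := Subgroup G) (Subgroup.mem_zpowers g)⟩ with hg'def
  set π : ↥(E ⊔ Subgroup.zpowers g) →* (V →ₗ[ℂ] V) := (Units.coeHom _).comp ρ with hπdef
  set E' : Subgroup ↥(E ⊔ Subgroup.zpowers g) := E.subgroupOf (E ⊔ Subgroup.zpowers g) with hE'def
  set C : Subgroup ↥(E ⊔ Subgroup.zpowers g) := Subgroup.zpowers g' with hCdef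
  letI : Fintype ↥E' := Fintype.ofFinite _
  letI : Fintype ↥C := Fintype.ofFinite _
  have hcardE' : Nat.card ↥E' = 8 := by
    rw [← hE_card]
    exact Nat.card_congr (Subgroup.subgroupOfEquivOfLe
      (le_sup_left : E ≤ E ⊔ Subgroup.zpowers g)).toEquiv
  have horderg' : orderOf g' = 7 := by rw [hg'def, Subgroup.orderOf_mk]; exact hg
  have hcardC : Nat.card ↥C = 7 := by rw [hCdef, Nat.card_zpowers]; exact horderg'
  have hE'norm : ∀ h : ↥(E ⊔ Subgroup.zpowers g), ∀ y ∈ E', h * y * h⁻¹ ∈ E' := by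
    intro h y hy
    rw [hE'def, Subgroup.mem_subgroupOf] at hy ⊢
    simpa using Subgroup.Normal.conj_mem ‹E.Normal› _ hy ↑h
  set SE := frobGrpSum π E' with hSEdef
  set SC := frobGrpSum π C with hSCdef
  have hSEcomm : ∀ h : ↥(E ⊔ Subgroup.zpowers g), π h * SE = SE * π h := fun h => frob_grpSum_comm π hE'norm h
  have hCEcomm : SC * SE = SE * SC := by
    have h1 : SC * SE = ∑ x : ↥C, π ↑x * SE := by rw [hSCdef, frobGrpSum, Finset.sum_mul]
    have h2 : SE * SC = ∑ x : ↥C, SE * π ↑x := by rw [hSCdef, frobGrpSum, Finset.mul_sum]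
    rw [h1, h2]
    exact Finset.sum_congr rfl fun x _ => hSEcomm ↑x
  have hSEsq : SE * SE = (8 : ℂ) • SE := by
    rw [hSEdef, frob_grpSum_sq, hcardE']; norm_num
  have hSCsq : SC * SC = (7 : ℂ) • SC := by
    rw [hSCdef, frob_grpSum_sq, hcardC]; norm_num
  have idemE : ((8:ℂ)⁻¹ • SE) * ((8:ℂ)⁻¹ • SE) = (8:ℂ)⁻¹ • SE := by
    rw [smul_mul_assoc, mul_smul_comm, hSEsq, smul_smul, smul_smul]; norm_num
  have idemC : ((7:ℂ)⁻¹ • SC) * ((7:ℂ)⁻¹ • SC) = (7:ℂ)⁻¹ • SC := by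
    rw [smul_mul_assoc, mul_smul_comm, hSCsq, smul_smul, smul_smul]; norm_num
  have hprod : (SC * SE) * (SC * SE) = (56:ℂ) • (SC * SE) := by
    calc (SC * SE) * (SC * SE) = SC * (SE * SC) * SE := by
          simp only [mul_assoc]
      _ = SC * (SC * SE) * SE := by rw [← hCEcomm]
      _ = (SC * SC) * (SE * SE) := by simp only [mul_assoc]
      _ = ((7:ℂ) • SC) * ((8:ℂ) • SE) := by rw [hSCsq, hSEsq]
      _ = (56:ℂ) • (SC * SE) := by
          rw [smul_mul_assoc, mul_smul_comm, smul_smul]; norm_num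
  have idemCE : ((56:ℂ)⁻¹ • (SC * SE)) * ((56:ℂ)⁻¹ • (SC * SE)) = (56:ℂ)⁻¹ • (SC * SE) := by
    rw [smul_mul_assoc, mul_smul_comm, hprod, smul_smul, smul_smul]; norm_num
  obtain ⟨pE, hprojE, htE⟩ := frob_idem_trace idemE
  obtain ⟨pC, hprojC, htC⟩ := frob_idem_trace idemC
  obtain ⟨pCE, hprojCE, htCE⟩ := frob_idem_trace idemCE
  set d := Module.finrank ℂ V with hd
  set a := Module.finrank ℂ pE with ha
  set c := Module.finrank ℂ pC with hc
  set r := Module.finrank ℂ pCE with hr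
  have htSE : trace ℂ V SE = (8:ℂ) * (a:ℂ) := by
    rw [map_smul, smul_eq_mul] at htE
    rw [← htE, ← mul_assoc]; norm_num
  have htSC : trace ℂ V SC = (7:ℂ) * (c:ℂ) := by
    rw [map_smul, smul_eq_mul] at htC
    rw [← htC, ← mul_assoc]; norm_num
  have htSCE : trace ℂ V (SC * SE) = (56:ℂ) * (r:ℂ) := by
    rw [map_smul, smul_eq_mul] at htCE
    rw [← htCE, ← mul_assoc]; norm_num
  -- Step 4: the character identity on the coset sums
  have hkey : ∀ x : ↥C, (x : ↥(E ⊔ Subgroup.zpowers g)) ≠ 1 → trace ℂ V (π ↑x * SE) = 8 * trace ℂ V (π ↑x) := by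
    intro x hx1
    obtain ⟨k, hk7, hgk⟩ : ∃ k : ℕ, ¬ (7 ∣ k) ∧ g' ^ k = (x : ↥(E ⊔ Subgroup.zpowers g)) := by
      obtain ⟨n, hn⟩ := Subgroup.mem_zpowers_iff.mp x.2
      have h7 : g' ^ (7:ℤ) = 1 := by
        have h1 : g' ^ (7:ℕ) = 1 := by rw [← horderg']; exact pow_orderOf_eq_one g'
        rw [show (7:ℤ) = ((7:ℕ):ℤ) by norm_num, zpow_natCast]
        exact h1
      have h0 : (0:ℤ) ≤ n % 7 := Int.emod_nonneg n (by norm_num)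
      have hmod : g' ^ ((n % 7).toNat) = (x : ↥(E ⊔ Subgroup.zpowers g)) := by
        rw [← zpow_natCast, Int.toNat_of_nonneg h0]
        calc g' ^ (n % 7) = g' ^ (n % 7) * (g' ^ (7:ℤ)) ^ (n / 7) := by
              rw [h7, one_zpow, mul_one]
          _ = g' ^ (n % 7 + 7 * (n / 7)) := by rw [← zpow_mul, ← zpow_add]
          _ = g' ^ n := by rw [Int.emod_add_mul_ediv]
          _ = ↑x := hn
      refine ⟨(n % 7).toNat, ?_, hmod⟩
      intro hdvd
      apply hx1
      have hlt : n % 7 < 7 := Int.emod_lt_of_pos n (by norm_num)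
      have hz : (n % 7).toNat = 0 := by omega
      rw [hz, pow_zero] at hmod
      exact hmod.symm
    have hsum : π ↑x * SE = ∑ e : ↥E', π (↑x * ↑e) := by
      rw [hSEdef, frobGrpSum, Finset.mul_sum]
      exact Finset.sum_congr rfl fun e _ => (map_mul π _ _).symm
    have heach : ∀ e : ↥E', trace ℂ V (π (↑x * ↑e)) = trace ℂ V (π ↑x) := by
      intro e
      have heE : ((e : ↥(E ⊔ Subgroup.zpowers g)) : G) ∈ E := Subgroup.mem_subgroupOf.mp (hE'def ▸ e.2)
      obtain ⟨y, hyE, hy⟩ := hconj k hk7 _ heE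
      set y' : ↥(E ⊔ Subgroup.zpowers g) := ⟨y, Subgroup.mem_sup_left hyE⟩ with hy'def
      have hxg : ((x : ↥(E ⊔ Subgroup.zpowers g)) : G) = g ^ k := by
        rw [← hgk]; push_cast; rfl
      have hHeq : (x : ↥(E ⊔ Subgroup.zpowers g)) * (e : ↥(E ⊔ Subgroup.zpowers g)) = y' * (x : ↥(E ⊔ Subgroup.zpowers g)) * y'⁻¹ := by
        ext
        push_cast
        rw [hxg]
        exact hy
      rw [hHeq]
      have hsplitmul : π (y' * ↑x * y'⁻¹) = π y' * π ↑x * π y'⁻¹ := by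
        rw [map_mul, map_mul]
      rw [hsplitmul, trace_mul_comm, ← mul_assoc, ← map_mul, inv_mul_cancel, map_one, one_mul]
    rw [hsum, map_sum, Finset.sum_congr rfl fun e _ => heach e, Finset.sum_const,
      Finset.card_univ, ← Nat.card_eq_fintype_card, hcardE', nsmul_eq_mul]
    norm_num
  -- Step 5: assemble the trace identity
  have hsplit : trace ℂ V (SC * SE) =
      trace ℂ V SE + 8 * (trace ℂ V SC - (d:ℂ)) := by
    have e1 : trace ℂ V (SC * SE) = ∑ x : ↥C, trace ℂ V (π ↑x * SE) := by
      rw [show SC * SE = ∑ x : ↥C, π ↑x * SE by rw [hSCdef, frobGrpSum, Finset.sum_mul],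
        map_sum]
    have e2 : trace ℂ V SC = ∑ x : ↥C, trace ℂ V (π ↑x) := by
      rw [hSCdef, frobGrpSum, map_sum]
    set T : ℂ := ∑ x ∈ Finset.univ.erase (1 : ↥C), trace ℂ V (π ↑x) with hT
    have hone : ((1 : ↥C) : ↥(E ⊔ Subgroup.zpowers g)) = 1 := rfl
    have hd1 : trace ℂ V (π ↑(1 : ↥C)) = (d:ℂ) := by
      rw [hone, map_one, trace_one]
    have hT2 : trace ℂ V SC = (d:ℂ) + T := by
      rw [e2, ← Finset.add_sum_erase Finset.univ _ (Finset.mem_univ (1 : ↥C)), hd1]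
    have hT1 : trace ℂ V (SC * SE) = trace ℂ V SE + 8 * T := by
      rw [e1, ← Finset.add_sum_erase Finset.univ _ (Finset.mem_univ (1 : ↥C))]
      have hfirst : trace ℂ V (π ↑(1 : ↥C) * SE) = trace ℂ V SE := by
        rw [hone, map_one, one_mul]
      have hrest : ∑ x ∈ Finset.univ.erase (1 : ↥C), trace ℂ V (π ↑x * SE)
          = ∑ x ∈ Finset.univ.erase (1 : ↥C), 8 * trace ℂ V (π ↑x) := by
        refine Finset.sum_congr rfl fun x hx => hkey x ?_
        intro hcoe
        exact (Finset.mem_erase.mp hx).1 (Subtype.ext hcoe)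
      rw [hfirst, hrest, ← Finset.mul_sum, ← hT]
    rw [hT1, hT2]
    ring
  -- Step 6: the numerology
  have hnat : 56 * r + 8 * d = 8 * a + 56 * c := by
    have hcast : ((56 * r + 8 * d : ℕ) : ℂ) = ((8 * a + 56 * c : ℕ) : ℂ) := by
      push_cast
      linear_combination hsplit - htSCE + htSE + 8 * htSC
    exact_mod_cast hcast
  have haLE : a ≤ d := Submodule.finrank_le pE
  have haned : a ≠ d := by
    intro had
    have hpEtop : pE = ⊤ := Submodule.eq_top_of_finrank_eq had
    obtain ⟨x₀, hx₀E, hx₀1⟩ : ∃ x₀ ∈ E, x₀ ≠ 1 := by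
      by_contra hno
      push_neg at hno
      have hEbot : E = ⊥ := by
        ext z
        simp only [Subgroup.mem_bot]
        exact ⟨fun hz => hno z hz, fun hz => hz ▸ one_mem E⟩
      rw [hEbot] at hE_card
      simp at hE_card
    set x₀' : ↥(E ⊔ Subgroup.zpowers g) := ⟨x₀, Subgroup.mem_sup_left hx₀E⟩ with hx₀'def
    have hx₀'E' : x₀' ∈ E' := by rw [hE'def, Subgroup.mem_subgroupOf]; exact hx₀E
    have hfix : π x₀' * SE = SE := by rw [hSEdef]; exact frob_mul_grpSum π hx₀'E'
    have hSEid : SE = (8:ℂ) • (1 : V →ₗ[ℂ] V) := by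
      have hone : (8:ℂ)⁻¹ • SE = 1 := by
        apply LinearMap.ext
        intro v
        exact hprojE.map_id v (hpEtop ▸ Submodule.mem_top)
      calc SE = (8:ℂ) • ((8:ℂ)⁻¹ • SE) := by rw [smul_smul]; norm_num
        _ = (8:ℂ) • (1 : V →ₗ[ℂ] V) := by rw [hone]
    rw [hSEid, mul_smul_comm, mul_one] at hfix
    have hπ1 : π x₀' = 1 := smul_right_injective _ (by norm_num : (8:ℂ) ≠ 0) hfix
    have hπ1' : ((ρ x₀' : (V →ₗ[ℂ] V)ˣ) : V →ₗ[ℂ] V) = 1 := hπ1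
    have hu : ρ x₀' = 1 := Units.val_eq_one.mp hπ1'
    have := hρ (hu.trans (map_one ρ).symm)
    exact hx₀1 (congrArg Subtype.val this)
  have hc1 : 1 ≤ c := by omega
  -- Step 7: extract the fixed vector
  have hpCne : pC ≠ ⊥ := by
    intro hbot
    rw [hc, hbot, finrank_bot] at hc1
    omega
  obtain ⟨v, hvpC, hv0⟩ := (Submodule.ne_bot_iff pC).mp hpCne
  have hfixv : ((7:ℂ)⁻¹ • SC) v = v := hprojC.map_id v hvpC
  have hgfix : π g' * SC = SC := by
    rw [hSCdef]; exact frob_mul_grpSum π (hCdef ▸ Subgroup.mem_zpowers g')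
  refine ⟨v, hv0, ?_⟩
  have hfinal : π g' v = v := by
    conv_lhs => rw [← hfixv]
    rw [← Module.End.mul_apply, mul_smul_comm, hgfix]
    exact hfixv
  exact hfinal
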